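/- Let A be a complex vector space of dimension at least 2, and let f, g : A → ℂ be linear functions. The product x*y = f(y)x + g(x)y defines a left-symmetric algebra on A if and only if f = 0 or g = 0. -/
import Mathlib


theorem stmt_0 (A : Type*) [AddCommGroup A] [Module ℂ A] [FiniteDimensional ℂ A]
    (hdim : 2 ≤ Module.finrank ℂ A) (f g : A →ₗ[ℂ] ℂ)
    (mul : A → A → A) (hmul : ∀ x y, mul x y = f y • x + g x • y) :
    (∀ x y z : A,
      mul (mul x y) z - mul x (mul y z) = mul (mul y x) z - mul y (mul x z)) ↔
      (f = 0 ∨ g = 0) := by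
  constructor
  · intro h
    by_contra hc
    push_neg at hc
    obtain ⟨hf, hg⟩ := hc
    obtain ⟨z, hz⟩ : ∃ z, f z ≠ 0 := by
      by_contra hz; push_neg at hz
      exact hf (LinearMap.ext fun a => hz a)
    obtain ⟨x, hx⟩ : ∃ x, g x ≠ 0 := by
      by_contra hx; push_neg at hx
      exact hg (LinearMap.ext fun a => hx a)
    -- key identity
    have key : ∀ a b c : A,
        (g a * f c) • b - (g b * f c) • a + (f b * g a - f a * g b) • c = 0 := by
      intro a b c
      have e := h a b c
      simp only [hmul, map_add, map_smul, smul_eq_mul] at e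
      linear_combination (norm := module) e
    -- ker g is nontrivial
    have hker : LinearMap.ker g ≠ ⊥ := by
      intro hbot
      have h1 := LinearMap.finrank_range_add_finrank_ker g
      rw [hbot, finrank_bot] at h1
      have h2 : Module.finrank ℂ ↥(LinearMap.range g) ≤ Module.finrank ℂ ℂ :=
        Submodule.finrank_le _
      simp [Complex.finrank_real_complex] at h2
      omega
    obtain ⟨y0, hy0mem, hy0⟩ := Submodule.exists_mem_ne_zero_of_ne_bot hker
    have hgy0 : g y0 = 0 := hy0mem
    have E : f z • y0 + f y0 • z = 0 := by
      have := key x y0 z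
      rw [hgy0] at this
      have h2 : (g x) • (f z • y0 + f y0 • z) = 0 := by
        linear_combination (norm := module) this
      rcases smul_eq_zero.mp h2 with h | h
      · exact absurd h hx
      · exact h
    by_cases hfy0 : f y0 = 0
    · rw [hfy0, zero_smul, add_zero, smul_eq_zero] at E
      rcases E with h | h
      · exact hz h
      · exact hy0 h
    · have hgz : g z = 0 := by
        have h5 : f z * g y0 + f y0 * g z = 0 := by
          have := congrArg g E
          simpa [map_add, map_smul, smul_eq_mul] using this
        rw [hgy0, mul_zero, zero_add] at h5
        exact (mul_eq_zero.mp h5).resolve_left hfy0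
      have := key x z z
      rw [hgz] at this
      have h4 : ((2 : ℂ) * (g x * f z)) • z = 0 := by
        linear_combination (norm := module) this
      rcases smul_eq_zero.mp h4 with h | h
      · simp at h
        rcases h with h | h
        · exact hx h
        · exact hz h
      · exact hz (by rw [h, map_zero])
  · rintro (rfl | rfl) x y z <;>
      simp [hmul, map_add, map_smul, smul_smul, smul_add, mul_comm]
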